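/- arXiv:2405.20964 — 3 statements merged into one kernel-verified Lean document; each statement's English description precedes it below -/
import Mathlib

section
/- Let N be a closed normal subgroup of a profinite group G, and let x ∈ G be an element such that the closed subgroup generated by x has order coprime to the order of N, i.e. π(⟨x⟩) ∩ π(N) = ∅. Then the centraliser of the image of x in G/N equals the image of C_G(x)N, that is, C_{G/N}(xN) = C_G(x)N/N. -/
/-- The closed derived series of a topological group: at each step take the
topological closure of the commutator subgroup of the previous term. -/
def closedDerivedSeries (G : Type*) [Group G] [TopologicalSpace G] [IsTopologicalGroup G] :
    ℕ → Subgroup G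
  | 0 => ⊤
  | n + 1 => (⁅closedDerivedSeries G n, closedDerivedSeries G n⁆).topologicalClosure

/-- A topological group is soluble of derived length at most `n` if the `n`-th term of the
closed derived series is trivial. -/
def SolubleOfLength (G : Type*) [Group G] [TopologicalSpace G] [IsTopologicalGroup G]
    (n : ℕ) : Prop :=
  closedDerivedSeries G n = ⊥

/-- Soluble: soluble of derived length at most `n` for some `n`. -/
def Soluble (G : Type*) [Group G] [TopologicalSpace G] [IsTopologicalGroup G] : Prop :=
  ∃ n, SolubleOfLength G n

/-- `CA_d`: the centraliser of every non-trivial element is soluble of derived length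
at most `d`. -/
def IsCA (G : Type*) [Group G] [TopologicalSpace G] [IsTopologicalGroup G] (d : ℕ) : Prop :=
  ∀ x : G, x ≠ 1 → SolubleOfLength ↥(Subgroup.centralizer {x}) d

/-- Pro-`p`: every open normal subgroup has index a power of `p`. -/
def IsProP (G : Type*) [Group G] [TopologicalSpace G] (p : ℕ) : Prop :=
  ∀ N : Subgroup G, N.Normal → IsOpen (N : Set G) → ∃ k : ℕ, N.index = p ^ k

/-- Virtually pro-`p` (for some prime `p`): some open subgroup is pro-`p`. -/
def VirtuallyProP (G : Type*) [Group G] [TopologicalSpace G] : Prop :=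
  ∃ p : ℕ, p.Prime ∧ ∃ H : Subgroup G, IsOpen (H : Set G) ∧ IsProP ↥H p

/-- Prosoluble: the quotient by every open normal subgroup is soluble. -/
def Prosoluble (G : Type*) [Group G] [TopologicalSpace G] : Prop :=
  ∀ (N : Subgroup G) [N.Normal], IsOpen (N : Set G) → IsSolvable (G ⧸ N)

/-- Pronilpotent: the quotient by every open normal subgroup is nilpotent. -/
def Pronilpotent (G : Type*) [Group G] [TopologicalSpace G] : Prop :=
  ∀ (N : Subgroup G) [N.Normal], IsOpen (N : Set G) → Group.IsNilpotent (G ⧸ N)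

/-- `primesOf G` = π(G): the set of primes dividing the order of some finite continuous
quotient of `G`, i.e. dividing the index of some open normal subgroup. -/
def primesOf (G : Type*) [Group G] [TopologicalSpace G] : Set ℕ :=
  {p | p.Prime ∧ ∃ N : Subgroup G, N.Normal ∧ IsOpen (N : Set G) ∧ p ∣ N.index}

/-- The Fitting height is at most `n`: there is a chain `1 = G_0 ≤ ⋯ ≤ G_n = G` of closed
normal subgroups all of whose successive quotients are pronilpotent. -/
def FittingHeightLe (G : Type*) [Group G] [TopologicalSpace G] (n : ℕ) : Prop :=
  ∃ c : ℕ → Subgroup G,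
    Monotone c ∧ c 0 = ⊥ ∧ c n = ⊤ ∧
    (∀ i, (c i).Normal ∧ IsClosed ((c i : Set G))) ∧
    ∀ i, i < n → ∀ [((c i).subgroupOf (c (i + 1))).Normal],
      Pronilpotent (↥(c (i + 1)) ⧸ (c i).subgroupOf (c (i + 1)))


open Subgroup

private lemma mem_normalizer_of_conj_mem {Q : Type*} [Group Q] [Finite Q] {M : Subgroup Q}
    {y : Q} (hy : ∀ m ∈ M, y * m * y⁻¹ ∈ M) : y ∈ normalizer (M : Set Q) := by
  rw [Subgroup.mem_normalizer_iff]
  intro g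
  refine ⟨fun hg => hy g hg, fun hg => ?_⟩
  have hinj : Function.Injective (fun m : M => (⟨y * m * y⁻¹, hy m.1 m.2⟩ : M)) := by
    intro a b hab
    have := congrArg Subtype.val hab
    simp only at this
    exact Subtype.ext (mul_left_cancel (mul_right_cancel this))
  obtain ⟨m, hm⟩ := (Finite.injective_iff_surjective.mp hinj) ⟨y * g * y⁻¹, hg⟩
  have h2 : y * (m : Q) * y⁻¹ = y * g * y⁻¹ := congrArg Subtype.val hm
  have h3 : (m : Q) = g := mul_left_cancel (mul_right_cancel h2)
  exact h3 ▸ m.2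

private lemma key_lift {Q : Type*} [Group Q] [Finite Q] (n : ℕ) :
    ∀ y : Q, orderOf y = n → ∀ M : Subgroup Q, y ∈ normalizer (M : Set Q) →
      Nat.Coprime n (Nat.card M) →
      ∀ h : Q, h⁻¹ * y * h * y⁻¹ ∈ M →
      ∃ c : Q, h⁻¹ * c ∈ M ∧ y * c = c * y := by
  induction n using Nat.strong_induction_on with
  | _ n IH =>
  intro y hyord M hyN hcop h hh
  have hn0 : n ≠ 0 := by
    rw [← hyord]
    exact fun hz => (orderOf_eq_zero_iff.mp hz) (isOfFinOrder_of_finite y)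
  rcases eq_or_ne n 1 with h1 | h1
  · have hy1 : y = 1 := orderOf_eq_one_iff.mp (h1 ▸ hyord)
    exact ⟨h, by simpa using one_mem M, by rw [hy1, one_mul, mul_one]⟩
  -- set up the prime decomposition
  have hp : (n.minFac).Prime := Nat.minFac_prime h1
  set p := n.minFac with hpdef
  set a := n.factorization p with hadef
  set pa := p ^ a with hpadef
  set m := n / pa with hmdef
  have hpa_dvd : pa ∣ n := Nat.ordProj_dvd n p
  have hnm : pa * m = n := Nat.ordProj_mul_ordCompl_eq_self n p
  have hm_dvd : m ∣ n := ⟨pa, by rw [← hnm, mul_comm]⟩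
  have hcopam : Nat.Coprime pa m := Nat.Coprime.pow_left a (Nat.coprime_ordCompl hp hn0)
  have hm0 : m ≠ 0 := by
    intro hm
    rw [hm, mul_zero] at hnm
    exact hn0 hnm.symm
  have ha0 : a ≠ 0 := by
    have := (Nat.Prime.factorization_pos_of_dvd hp hn0 n.minFac_dvd)
    omega
  have hpa1 : 1 < pa := by
    calc 1 < p := hp.one_lt
    _ ≤ p ^ a := Nat.le_self_pow ha0 p
  have hmn : m < n := by
    calc m = 1 * m := (one_mul m).symm
    _ < pa * m := (Nat.mul_lt_mul_right (Nat.pos_of_ne_zero hm0)).mpr hpa1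
    _ = n := hnm
  set u := y ^ m with hudef
  set v := y ^ pa with hvdef
  have hu_ord : orderOf u = pa := by
    rw [hudef, orderOf_pow, hyord, Nat.gcd_eq_right hm_dvd, ← hnm,
      Nat.mul_div_cancel _ (Nat.pos_of_ne_zero hm0)]
  have hv_ord : orderOf v = m := by
    rw [hvdef, orderOf_pow, hyord, Nat.gcd_eq_right hpa_dvd]
  have huv : Commute u v := (Commute.refl y).pow_pow m pa
  -- the subgroup of elements normalizing `M` and conjugating `h` into `h * M`
  let K : Subgroup Q :=
    { carrier := {z | z ∈ normalizer (M : Set Q) ∧ h⁻¹ * z * h * z⁻¹ ∈ M}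
      one_mem' := by
        refine ⟨one_mem _, ?_⟩
        have e : h⁻¹ * 1 * h * (1 : Q)⁻¹ = 1 := by group
        rw [e]; exact one_mem M
      mul_mem' := by
        rintro z w ⟨hz1, hz2⟩ ⟨hw1, hw2⟩
        refine ⟨mul_mem hz1 hw1, ?_⟩
        have e : h⁻¹ * (z * w) * h * (z * w)⁻¹ =
            (h⁻¹ * z * h * z⁻¹) * (z * (h⁻¹ * w * h * w⁻¹) * z⁻¹) := by group
        rw [e]
        exact mul_mem hz2 ((Subgroup.mem_normalizer_iff.mp hz1 _).mp hw2)
      inv_mem' := by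
        rintro z ⟨hz1, hz2⟩
        refine ⟨inv_mem hz1, ?_⟩
        have e : h⁻¹ * z⁻¹ * h * (z⁻¹)⁻¹ = z⁻¹ * (h⁻¹ * z * h * z⁻¹)⁻¹ * (z⁻¹)⁻¹ := by group
        rw [e]
        exact (Subgroup.mem_normalizer_iff.mp (inv_mem hz1) _).mp (inv_mem hz2) }
  have hKmem : ∀ z : Q, z ∈ K ↔ (z ∈ normalizer (M : Set Q) ∧ h⁻¹ * z * h * z⁻¹ ∈ M) := fun z => Iff.rfl
  have hyK : y ∈ K := (hKmem y).mpr ⟨hyN, hh⟩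
  have huK : u ∈ K := pow_mem hyK m
  have hvK : v ∈ K := pow_mem hyK pa
  -- the coset `h * M` as a type, with the conjugation action of `⟨u⟩`
  let X := {w : Q // h⁻¹ * w ∈ M}
  letI : SMul (↥(Subgroup.zpowers u)) X :=
    ⟨fun z w => ⟨(z : Q) * w.1 * (z : Q)⁻¹, by
      have hzK : (z : Q) ∈ K := Subgroup.zpowers_le.mpr huK z.2
      obtain ⟨hz1, hz2⟩ := (hKmem _).mp hzK
      have e : h⁻¹ * ((z : Q) * w.1 * (z : Q)⁻¹) =
          (h⁻¹ * (z : Q) * h * (z : Q)⁻¹) * ((z : Q) * (h⁻¹ * w.1) * (z : Q)⁻¹) := by group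
      rw [e]
      exact mul_mem hz2 ((Subgroup.mem_normalizer_iff.mp hz1 _).mp w.2)⟩⟩
  letI : MulAction (↥(Subgroup.zpowers u)) X :=
    { one_smul := fun w => Subtype.ext (by
        show ((1 : ↥(Subgroup.zpowers u)) : Q) * w.1 * ((1 : ↥(Subgroup.zpowers u)) : Q)⁻¹ = w.1
        simp
        )
      mul_smul := fun z1 z2 w => Subtype.ext (by
        show ((z1 * z2 : ↥(Subgroup.zpowers u)) : Q) * w.1 * _⁻¹ =
          (z1 : Q) * ((z2 : Q) * w.1 * (z2 : Q)⁻¹) * (z1 : Q)⁻¹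
        push_cast
        group) }
  have hP : IsPGroup p ↥(Subgroup.zpowers u) :=
    IsPGroup.of_card (by rw [Nat.card_zpowers, hu_ord])
  have hcardX : Nat.card X = Nat.card M := Nat.card_congr
    ⟨fun w => ⟨h⁻¹ * w.1, w.2⟩, fun mm => ⟨h * mm.1, by simpa using mm.2⟩,
     fun w => Subtype.ext (by simp), fun mm => Subtype.ext (by simp)⟩
  have hpX : ¬ p ∣ Nat.card X := by
    rw [hcardX]
    intro hdvd
    have hpn : p ∣ n := n.minFac_dvd
    have : p ∣ Nat.gcd n (Nat.card M) := Nat.dvd_gcd hpn hdvd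
    rw [hcop.gcd_eq_one] at this
    exact hp.one_lt.ne' (Nat.dvd_one.mp this) |>.elim
  haveI : Fact p.Prime := ⟨hp⟩
  obtain ⟨w, hw⟩ := hP.nonempty_fixed_point_of_prime_not_dvd_card X hpX
  have hw' : u * w.1 * u⁻¹ = w.1 :=
    congrArg Subtype.val (hw ⟨u, Subgroup.mem_zpowers u⟩)
  set h₀ := w.1 with hh₀def
  have hh₀ : h⁻¹ * h₀ ∈ M := w.2
  have h₀cent : h₀ ∈ Subgroup.centralizer {u} := by
    rw [Subgroup.mem_centralizer_singleton_iff]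
    calc h₀ * u = (u * h₀ * u⁻¹) * u := by rw [hw']
    _ = u * h₀ := by group
  have hvcent : v ∈ Subgroup.centralizer {u} :=
    Subgroup.mem_centralizer_singleton_iff.mpr huv.symm.eq
  set C' := M ⊓ Subgroup.centralizer {u} with hC'def
  have hvM : v ∈ normalizer (M : Set Q) := ((hKmem v).mp hvK).1
  have hvC' : v ∈ normalizer (C' : Set Q) := by
    rw [Subgroup.mem_normalizer_iff]
    intro z
    rw [Subgroup.mem_inf, Subgroup.mem_inf]
    constructor
    · rintro ⟨hz1, hz2⟩
      exact ⟨(Subgroup.mem_normalizer_iff.mp hvM z).mp hz1,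
        (Subgroup.mem_normalizer_iff.mp (Subgroup.le_normalizer hvcent) z).mp hz2⟩
    · rintro ⟨hz1, hz2⟩
      exact ⟨(Subgroup.mem_normalizer_iff.mp hvM z).mpr hz1,
        (Subgroup.mem_normalizer_iff.mp (Subgroup.le_normalizer hvcent) z).mpr hz2⟩
  have hcop' : Nat.Coprime m (Nat.card C') :=
    (hcop.coprime_dvd_left hm_dvd).coprime_dvd_right
      (Subgroup.card_dvd_of_le inf_le_left)
  have hcond : h₀⁻¹ * v * h₀ * v⁻¹ ∈ C' := by
    rw [Subgroup.mem_inf]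
    constructor
    · have e : h₀⁻¹ * v * h₀ * v⁻¹ =
          (h⁻¹ * h₀)⁻¹ * (h⁻¹ * v * h * v⁻¹) * (v * (h⁻¹ * h₀) * v⁻¹) := by group
      rw [e]
      exact mul_mem (mul_mem (inv_mem hh₀) ((hKmem v).mp hvK).2)
        ((Subgroup.mem_normalizer_iff.mp hvM _).mp hh₀)
    · exact mul_mem (mul_mem (mul_mem (inv_mem h₀cent) hvcent) h₀cent) (inv_mem hvcent)
  obtain ⟨c, hc1, hc2⟩ := IH m hmn v hv_ord C' hvC' hcop' h₀ hcond
  have hcu : Commute u c := by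
    have hcmem : c ∈ Subgroup.centralizer {u} := by
      have e : c = h₀ * (h₀⁻¹ * c) := by group
      rw [e]
      exact mul_mem h₀cent ((Subgroup.mem_inf.mp hc1).2)
    exact (Subgroup.mem_centralizer_singleton_iff.mp hcmem).symm
  have hcv : Commute v c := hc2
  obtain ⟨A, B, hAB⟩ : ∃ A B : ℤ, (pa : ℤ) * A + (m : ℤ) * B = 1 := by
    refine ⟨Nat.gcdA pa m, Nat.gcdB pa m, ?_⟩
    have := Nat.gcd_eq_gcd_ab pa m
    rw [hcopam.gcd_eq_one] at this
    exact_mod_cast this.symm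
  have hy_eq : y = v ^ A * u ^ B := by
    have e1 : y = y ^ ((pa : ℤ) * A + (m : ℤ) * B) := by rw [hAB, zpow_one]
    rw [e1, zpow_add, zpow_mul, zpow_mul, zpow_natCast, zpow_natCast]
  have hyc : Commute y c := by
    rw [hy_eq]
    exact Commute.mul_left (hcv.zpow_left A) (hcu.zpow_left B)
  refine ⟨c, ?_, hyc.eq⟩
  have e : h⁻¹ * c = (h⁻¹ * h₀) * (h₀⁻¹ * c) := by group
  rw [e]
  exact mul_mem hh₀ ((Subgroup.mem_inf.mp hc1).1)


open Subgroup


private lemma mem_of_forall_open_normal {G : Type*} [Group G] [TopologicalSpace G]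
    [IsTopologicalGroup G] [CompactSpace G] [T2Space G] [TotallyDisconnectedSpace G]
    {S : Set G} (hS : IsClosed S) {z : G}
    (hz : ∀ U : Subgroup G, U.Normal → IsOpen (U : Set G) → ∃ s ∈ S, s⁻¹ * z ∈ U) :
    z ∈ S := by
  rw [← hS.closure_eq, mem_closure_iff]
  intro o ho hzo
  have h1 : (1 : G) ∈ (fun w => z * w) ⁻¹' o := by simpa using hzo
  have hopen : IsOpen ((fun w => z * w) ⁻¹' o) := ho.preimage (continuous_const.mul continuous_id)
  obtain ⟨V, hV1, hV2⟩ := (nhds_basis_clopen (1 : G)).mem_iff.mp (hopen.mem_nhds h1)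
  obtain ⟨H, hH⟩ :=
    IsTopologicalGroup.exist_openNormalSubgroup_sub_clopen_nhds_of_one hV1.2 hV1.1
  obtain ⟨s, hsS, hsU⟩ := hz H.toSubgroup H.isNormal' H.toOpenSubgroup.isOpen'
  have h2 : z⁻¹ * s ∈ H.toSubgroup := by
    have := inv_mem hsU
    simpa [mul_inv_rev] using this
  have h3 : z * (z⁻¹ * s) ∈ o := hV2 (hH h2)
  refine ⟨s, ?_, hsS⟩
  simpa [mul_inv_cancel_left] using h3

private lemma primesOf_aux {G : Type*} [Group G] [TopologicalSpace G] [IsTopologicalGroup G]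
    (U : Subgroup G) [U.Normal] (hU : IsOpen (U : Set G)) (H : Subgroup G) {p : ℕ}
    (hp : p.Prime) (hdvd : p ∣ Nat.card (H.map (QuotientGroup.mk' U))) :
    p ∈ primesOf ↥H := by
  refine ⟨hp, U.subgroupOf H, inferInstance, ?_, ?_⟩
  · rw [Subgroup.subgroupOf, Subgroup.coe_comap]
    exact hU.preimage (continuous_subtype_val)
  · have key : (U.subgroupOf H).index = Nat.card (H.map (QuotientGroup.mk' U)) := by
      have h2 : (QuotientGroup.mk' U).ker.relIndex H =
          Nat.card (H.map (QuotientGroup.mk' U)) := Subgroup.relIndex_ker (K := H) (QuotientGroup.mk' U)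
      rw [QuotientGroup.ker_mk'] at h2
      exact h2
    rw [key]
    exact hdvd

/-- Lemma 2.3: if `N ⊴ G` is closed and `x ∈ G` satisfies `(|⟨x⟩|, |N|) = 1`, then
`C_{G/N}(xN) = C_G(x)N/N`. -/
theorem centralizer_quotient_eq_of_coprime
    (G : Type*) [Group G] [TopologicalSpace G] [IsTopologicalGroup G]
    [CompactSpace G] [T2Space G] [TotallyDisconnectedSpace G]
    (N : Subgroup G) [N.Normal] (hNc : IsClosed (N : Set G)) (x : G)
    (hcop : primesOf ↥((Subgroup.zpowers x).topologicalClosure) ∩ primesOf ↥N = ∅) :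
    Subgroup.centralizer {(QuotientGroup.mk x : G ⧸ N)} =
      (Subgroup.centralizer {x} ⊔ N).map (QuotientGroup.mk' N) := by
  apply le_antisymm
  · intro q hq
    obtain ⟨g, rfl⟩ := QuotientGroup.mk'_surjective N q
    have hq' : (QuotientGroup.mk' N) g * (QuotientGroup.mk x : G ⧸ N) =
        (QuotientGroup.mk x : G ⧸ N) * (QuotientGroup.mk' N) g :=
      Subgroup.mem_centralizer_singleton_iff.mp hq
    have h1 : (QuotientGroup.mk (g * x) : G ⧸ N) = QuotientGroup.mk (x * g) := by
      rw [QuotientGroup.mk_mul, QuotientGroup.mk_mul]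
      simpa [QuotientGroup.mk'_apply] using hq'
    have hw : g⁻¹ * x * g * x⁻¹ ∈ N := by
      have e : g⁻¹ * x * g * x⁻¹ = x * ((g * x)⁻¹ * (x * g)) * x⁻¹ := by group
      rw [e]
      exact (inferInstance : N.Normal).conj_mem _ (QuotientGroup.eq.mp h1) x
    set C := (Subgroup.zpowers x).topologicalClosure with hCdef
    let ι := {U : Subgroup G // U.Normal ∧ IsOpen (U : Set G)}
    haveI : Nonempty ι := ⟨⟨⊤, inferInstance, by rw [Subgroup.coe_top]; exact isOpen_univ⟩⟩
    let Kf : ι → Set G := fun U =>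
      {c | (x * c)⁻¹ * (c * x) ∈ U.1 ∧ g⁻¹ * c ∈ ((N ⊔ U.1 : Subgroup G) : Set G)}
    have hclosed : ∀ U : ι, IsClosed (Kf U) := by
      intro U
      have hUc : IsClosed (U.1 : Set G) := Subgroup.isClosed_of_isOpen _ U.2.2
      have hNU : IsClosed ((N ⊔ U.1 : Subgroup G) : Set G) :=
        Subgroup.isClosed_of_isOpen _ (Subgroup.isOpen_mono le_sup_right U.2.2)
      have e : Kf U = (fun c => (x * c)⁻¹ * (c * x)) ⁻¹' (U.1 : Set G) ∩
          (fun c => g⁻¹ * c) ⁻¹' ((N ⊔ U.1 : Subgroup G) : Set G) := rfl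
      rw [e]
      exact (hUc.preimage (by continuity)).inter (hNU.preimage (by continuity))
    have hne : ∀ U : ι, (Kf U).Nonempty := by
      intro U
      haveI hUn : U.1.Normal := U.2.1
      haveI : Finite (G ⧸ U.1) := U.1.quotient_finite_of_isOpen U.2.2
      set f := QuotientGroup.mk' U.1 with hfdef
      set M' := N.map f with hM'def
      haveI hM'n : M'.Normal :=
        Subgroup.Normal.map inferInstance f (QuotientGroup.mk'_surjective U.1)
      have hynorm : f x ∈ normalizer (M' : Set (G ⧸ U.1)) := by
        rw [Subgroup.normalizer_eq_top_iff.mpr hM'n]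
        exact Subgroup.mem_top _
      have hcopU : Nat.Coprime (orderOf (f x)) (Nat.card M') := by
        by_contra hnc
        obtain ⟨p, hp, hp1, hp2⟩ := Nat.Prime.not_coprime_iff_dvd.mp hnc
        have hpx : p ∈ primesOf ↥C := by
          apply primesOf_aux U.1 U.2.2 C hp
          refine dvd_trans hp1 ?_
          have hle : Subgroup.zpowers (f x) ≤ C.map f :=
            Subgroup.zpowers_le.mpr (Subgroup.mem_map.mpr
              ⟨x, Subgroup.le_topologicalClosure _ (Subgroup.mem_zpowers x), rfl⟩)
          exact Nat.card_zpowers (f x) ▸ Subgroup.card_dvd_of_le hle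
        have hpN : p ∈ primesOf ↥N := primesOf_aux U.1 U.2.2 N hp hp2
        have hmem : p ∈ primesOf ↥C ∩ primesOf ↥N := ⟨hpx, hpN⟩
        rw [hcop] at hmem
        exact hmem
      have hcondU : (f g)⁻¹ * f x * f g * (f x)⁻¹ ∈ M' := by
        have e : (f g)⁻¹ * f x * f g * (f x)⁻¹ = f (g⁻¹ * x * g * x⁻¹) := by
          simp [map_mul, map_inv]
        rw [e]
        exact Subgroup.mem_map_of_mem f hw
      obtain ⟨c', hc'1, hc'2⟩ :=
        key_lift (orderOf (f x)) (f x) rfl M' hynorm hcopU (f g) hcondU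
      obtain ⟨c, rfl⟩ := QuotientGroup.mk'_surjective U.1 c'
      refine ⟨c, ?_, ?_⟩
      · have e : f (x * c) = f (c * x) := by
          simp only [map_mul]
          exact hc'2
        rw [hfdef, QuotientGroup.mk'_apply, QuotientGroup.mk'_apply, QuotientGroup.eq] at e
        exact e
      · have hfc : f (g⁻¹ * c) ∈ M' := by
          have e : f (g⁻¹ * c) = (f g)⁻¹ * f c := by simp [map_mul, map_inv]
          rw [e]
          exact hc'1
        obtain ⟨n, hn, hfn⟩ := Subgroup.mem_map.mp hfc
        have hU2 : n⁻¹ * (g⁻¹ * c) ∈ U.1 := by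
          rw [hfdef, QuotientGroup.mk'_apply, QuotientGroup.mk'_apply, QuotientGroup.eq] at hfn
          exact hfn
        show g⁻¹ * c ∈ ((N ⊔ U.1 : Subgroup G) : Set G)
        rw [SetLike.mem_coe]
        have e : g⁻¹ * c = n * (n⁻¹ * (g⁻¹ * c)) := by group
        rw [e]
        exact mul_mem ((le_sup_left : N ≤ N ⊔ U.1) hn)
          ((le_sup_right : U.1 ≤ N ⊔ U.1) hU2)
    have hdir : Directed (· ⊇ ·) Kf := by
      intro U V
      haveI := U.2.1; haveI := V.2.1
      refine ⟨⟨U.1 ⊓ V.1, inferInstance,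
        by rw [Subgroup.coe_inf]; exact U.2.2.inter V.2.2⟩, ?_, ?_⟩
      · intro c hc
        exact ⟨(inf_le_left : U.1 ⊓ V.1 ≤ U.1) hc.1,
          (sup_le_sup_left inf_le_left N : N ⊔ U.1 ⊓ V.1 ≤ N ⊔ U.1) hc.2⟩
      · intro c hc
        exact ⟨(inf_le_right : U.1 ⊓ V.1 ≤ V.1) hc.1,
          (sup_le_sup_left inf_le_right N : N ⊔ U.1 ⊓ V.1 ≤ N ⊔ V.1) hc.2⟩
    obtain ⟨c, hc⟩ := IsCompact.nonempty_iInter_of_directed_nonempty_isCompact_isClosed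
      Kf hdir hne (fun U => (hclosed U).isCompact) hclosed
    simp only [Set.mem_iInter] at hc
    have hxc : x * c = c * x := by
      have hz : (x * c)⁻¹ * (c * x) ∈ ({1} : Set G) := by
        apply mem_of_forall_open_normal isClosed_singleton
        intro U hUn hUo
        exact ⟨1, rfl, by simpa using (hc ⟨U, hUn, hUo⟩).1⟩
      exact inv_mul_eq_one.mp (Set.mem_singleton_iff.mp hz)
    have hgc : g⁻¹ * c ∈ N := by
      apply mem_of_forall_open_normal hNc
      intro U hUn hUo
      have hcU := (hc ⟨U, hUn, hUo⟩).2
      haveI := hUn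
      rw [Subgroup.mul_normal N U] at hcU
      obtain ⟨a, ha, b, hb, hab⟩ := hcU
      refine ⟨a, ha, ?_⟩
      rw [← hab, inv_mul_cancel_left]
      exact hb
    have hcc : c ∈ Subgroup.centralizer {x} :=
      Subgroup.mem_centralizer_singleton_iff.mpr hxc.symm
    refine Subgroup.mem_map.mpr ⟨g, ?_, rfl⟩
    have hg2 : c * (g⁻¹ * c)⁻¹ ∈ Subgroup.centralizer {x} ⊔ N :=
      mul_mem ((le_sup_left : Subgroup.centralizer {x} ≤ _) hcc)
        ((le_sup_right : N ≤ _) (inv_mem hgc))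
    rwa [show c * (g⁻¹ * c)⁻¹ = g from by group] at hg2
  · rw [Subgroup.map_sup]
    apply sup_le
    · rintro q ⟨cc, hcc, rfl⟩
      rw [Subgroup.mem_centralizer_singleton_iff]
      have h2 : cc * x = x * cc := Subgroup.mem_centralizer_singleton_iff.mp hcc
      rw [QuotientGroup.mk'_apply, ← QuotientGroup.mk_mul, ← QuotientGroup.mk_mul, h2]
    · rintro q ⟨nn, hnn, rfl⟩
      have h2 : (QuotientGroup.mk' N) nn = 1 := by
        rw [QuotientGroup.mk'_apply]
        exact (QuotientGroup.eq_one_iff nn).mpr hnn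
      rw [h2]
      exact one_mem _
end

section
/- Let G = BA be a profinite group which is the product of a non-trivial closed normal subgroup B and a closed subgroup A such that π(A) ∩ π(B) = ∅, and suppose G is a CA_d-group for a positive integer d. Then A has an open subgroup that is soluble of derived length at most d; if moreover A is infinite, then B is soluble of derived length at most d. -/
open scoped Pointwise
open scoped commutatorElement

section CAdAuxSection

set_option linter.unusedSectionVars false

namespace CAdAux

open Subgroup Set

variable {G : Type*} [Group G] [TopologicalSpace G] [IsTopologicalGroup G]


open Subgroup Set

variable {G : Type*} [Group G] [TopologicalSpace G] [IsTopologicalGroup G]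

/-- Abstract iterated derived subgroup of a subgroup, inside the ambient group. -/
def agds (K : Subgroup G) : ℕ → Subgroup G
  | 0 => K
  | n + 1 => ⁅agds K n, agds K n⁆

/-- Closed iterated derived subgroup of a subgroup, inside the ambient group. -/
def gcds (K : Subgroup G) : ℕ → Subgroup G
  | 0 => K
  | n + 1 => (⁅gcds K n, gcds K n⁆).topologicalClosure

lemma agds_le_self (K : Subgroup G) : ∀ n, agds K n ≤ K := by
  intro n
  induction n with
  | zero => exact le_rfl
  | succ n ih =>
    refine (commutator_le).mpr fun g₁ h₁ g₂ h₂ => ?_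
    rw [commutatorElement_def]
    exact K.mul_mem (K.mul_mem (K.mul_mem (ih h₁) (ih h₂)) (K.inv_mem (ih h₁)))
      (K.inv_mem (ih h₂))

lemma agds_mono {K L : Subgroup G} (h : K ≤ L) : ∀ n, agds K n ≤ agds L n := by
  intro n
  induction n with
  | zero => exact h
  | succ n ih => exact commutator_mono ih ih

lemma agds_map {G' : Type*} [Group G'] (f : G →* G') (K : Subgroup G) :
    ∀ n, (agds K n).map f = agds (K.map f) n := by
  intro n
  induction n with
  | zero => rfl
  | succ n ih => show (⁅agds K n, agds K n⁆).map f = _; rw [Subgroup.map_commutator, ih]; rfl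

lemma agds_normal {K : Subgroup G} (hK : K.Normal) : ∀ n, (agds K n).Normal := by
  intro n
  induction n with
  | zero => exact hK
  | succ n ih => haveI := ih; exact Subgroup.commutator_normal _ _

lemma topCl_mono {K L : Subgroup G} (h : K ≤ L) :
    K.topologicalClosure ≤ L.topologicalClosure :=
  Subgroup.topologicalClosure_minimal _ (h.trans (Subgroup.le_topologicalClosure _))
    (Subgroup.isClosed_topologicalClosure _)

lemma gcds_mono {K L : Subgroup G} (h : K ≤ L) : ∀ n, gcds K n ≤ gcds L n := by
  intro n
  induction n with
  | zero => exact h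
  | succ n ih => exact topCl_mono (commutator_mono ih ih)

lemma agds_le_gcds (K : Subgroup G) : ∀ n, agds K n ≤ gcds K n := by
  intro n
  induction n with
  | zero => exact le_rfl
  | succ n ih =>
    exact (commutator_mono ih ih).trans (Subgroup.le_topologicalClosure _)

/-- commutator of closures is contained in closure of commutator -/
lemma commutator_topCl (K L : Subgroup G) :
    ⁅K.topologicalClosure, L.topologicalClosure⁆ ≤ ⁅K, L⁆.topologicalClosure := by
  rw [commutator_le]
  have hTcl : IsClosed ((⁅K, L⁆.topologicalClosure : Set G)) :=
    Subgroup.isClosed_topologicalClosure _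
  have step1 : ∀ a ∈ K, ∀ b ∈ L.topologicalClosure,
      ⁅a, b⁆ ∈ ⁅K, L⁆.topologicalClosure := by
    intro a ha b hb
    have hcont : Continuous fun y : G => a * y * a⁻¹ * y⁻¹ := by continuity
    have hcl : IsClosed {y : G | a * y * a⁻¹ * y⁻¹ ∈ (⁅K, L⁆.topologicalClosure : Set G)} :=
      hTcl.preimage hcont
    have hsub : (L : Set G) ⊆ {y : G | a * y * a⁻¹ * y⁻¹ ∈ (⁅K, L⁆.topologicalClosure : Set G)} := by
      intro y hy
      show a * y * a⁻¹ * y⁻¹ ∈ (⁅K, L⁆.topologicalClosure : Set G)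
      rw [← commutatorElement_def]
      exact Subgroup.le_topologicalClosure _ (commutator_mem_commutator ha hy)
    have : (_root_.closure ((L : Subgroup G) : Set G)) ⊆ _ := closure_minimal hsub hcl
    have hb' : b ∈ _root_.closure ((L : Subgroup G) : Set G) := by
      rw [← Subgroup.topologicalClosure_coe]; exact hb
    have := this hb'
    rw [commutatorElement_def]
    exact this
  intro a ha b hb
  have hcont : Continuous fun x : G => x * b * x⁻¹ * b⁻¹ := by continuity
  have hcl : IsClosed {x : G | x * b * x⁻¹ * b⁻¹ ∈ (⁅K, L⁆.topologicalClosure : Set G)} :=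
    hTcl.preimage hcont
  have hsub : (K : Set G) ⊆ {x : G | x * b * x⁻¹ * b⁻¹ ∈ (⁅K, L⁆.topologicalClosure : Set G)} := by
    intro x hx
    have := step1 x hx b hb
    rw [commutatorElement_def] at this
    exact this
  have hKa : a ∈ _root_.closure ((K : Subgroup G) : Set G) := by
    rw [← Subgroup.topologicalClosure_coe]; exact ha
  have := closure_minimal hsub hcl hKa
  rw [commutatorElement_def]
  exact this

lemma gcds_le_topCl_agds (K : Subgroup G) : ∀ n, gcds K n ≤ (agds K n).topologicalClosure := by
  intro n
  induction n with
  | zero => exact Subgroup.le_topologicalClosure _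
  | succ n ih =>
    show (⁅gcds K n, gcds K n⁆).topologicalClosure ≤ _
    refine Subgroup.topologicalClosure_minimal _ ?_ (Subgroup.isClosed_topologicalClosure _)
    exact (commutator_mono ih ih).trans (commutator_topCl _ _)

lemma topCl_bot [T1Space G] : ((⊥ : Subgroup G)).topologicalClosure = ⊥ := by
  refine le_antisymm ?_ (Subgroup.le_topologicalClosure _)
  refine Subgroup.topologicalClosure_minimal _ le_rfl ?_
  rw [Subgroup.coe_bot]
  exact isClosed_singleton





/-- image of a topological closure under a continuous hom is inside closure of image -/
lemma map_topCl_le {H K : Type*} [Group H] [TopologicalSpace H] [IsTopologicalGroup H]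
    [Group K] [TopologicalSpace K] [IsTopologicalGroup K]
    (f : H →* K) (hc : Continuous f) (S : Subgroup H) :
    (S.topologicalClosure).map f ≤ (S.map f).topologicalClosure := by
  rintro - ⟨y, hy, rfl⟩
  have hy' : y ∈ _root_.closure ((S : Subgroup H) : Set H) := hy
  have himg : f y ∈ _root_.closure (f '' ((S : Subgroup H) : Set H)) :=
    image_closure_subset_closure_image hc ⟨y, hy', rfl⟩
  have : f y ∈ _root_.closure ((S.map f : Subgroup K) : Set K) := by
    rw [Subgroup.coe_map]; exact himg
  exact this

/-- image of the topological closure of a subgroup of a closed subgroup -/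
lemma map_topCl [CompactSpace G] [T2Space G] {K : Subgroup G} (hK : IsClosed (K : Set G))
    (S : Subgroup ↥K) :
    (S.topologicalClosure).map K.subtype = (S.map K.subtype).topologicalClosure := by
  haveI : CompactSpace ↥K := isCompact_iff_compactSpace.mp hK.isCompact
  apply SetLike.coe_injective
  rw [Subgroup.coe_map, Subgroup.topologicalClosure_coe, Subgroup.topologicalClosure_coe,
    Subgroup.coe_map]
  apply subset_antisymm
  · exact image_closure_subset_closure_image continuous_subtype_val
  · refine closure_minimal (image_mono subset_closure) ?_
    exact ((isClosed_closure.isCompact).image continuous_subtype_val).isClosed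

lemma map_cds [CompactSpace G] [T2Space G] {K : Subgroup G} (hK : IsClosed (K : Set G)) :
    ∀ n, (closedDerivedSeries ↥K n).map K.subtype = gcds K n := by
  intro n
  induction n with
  | zero =>
    show (⊤ : Subgroup ↥K).map K.subtype = K
    rw [← MonoidHom.range_eq_map, Subgroup.range_subtype]
  | succ n ih =>
    show ((⁅closedDerivedSeries ↥K n, closedDerivedSeries ↥K n⁆).topologicalClosure).map K.subtype
      = (⁅gcds K n, gcds K n⁆).topologicalClosure
    rw [map_topCl hK, Subgroup.map_commutator, ih]

lemma soluble_iff_gcds [CompactSpace G] [T2Space G] {K : Subgroup G} (hK : IsClosed (K : Set G))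
    {d : ℕ} : SolubleOfLength ↥K d ↔ gcds K d = ⊥ := by
  unfold SolubleOfLength
  rw [← map_cds hK]
  constructor
  · intro h; rw [h, Subgroup.map_bot]
  · intro h
    exact ((Subgroup.map_eq_bot_iff_of_injective _ (Subgroup.subtype_injective K)).mp h)

lemma soluble_of_injective {H K : Type*} [Group H] [TopologicalSpace H] [IsTopologicalGroup H]
    [Group K] [TopologicalSpace K] [IsTopologicalGroup K]
    (f : H →* K) (hc : Continuous f) (hi : Function.Injective f) {n : ℕ}
    (h : SolubleOfLength K n) : SolubleOfLength H n := by
  have key : ∀ m, (closedDerivedSeries H m).map f ≤ closedDerivedSeries K m := by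
    intro m
    induction m with
    | zero => exact le_top
    | succ m ih =>
      show ((⁅closedDerivedSeries H m, closedDerivedSeries H m⁆).topologicalClosure).map f
        ≤ (⁅closedDerivedSeries K m, closedDerivedSeries K m⁆).topologicalClosure
      refine (map_topCl_le f hc _).trans ?_
      rw [Subgroup.map_commutator]
      refine Subgroup.topologicalClosure_minimal _ ?_
        (Subgroup.isClosed_topologicalClosure _)
      exact (commutator_mono ih ih).trans (Subgroup.le_topologicalClosure _)
  have : (closedDerivedSeries H n).map f ≤ ⊥ := by
    rw [← h]; exact key n
  unfold SolubleOfLength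
  exact ((Subgroup.map_eq_bot_iff_of_injective _ hi).mp (le_bot_iff.mp this))

/-- closure of a commutative subgroup is commutative -/
lemma comm_topCl [T2Space G] {K : Subgroup G} (h : ∀ x ∈ K, ∀ y ∈ K, x * y = y * x) :
    ∀ x ∈ K.topologicalClosure, ∀ y ∈ K.topologicalClosure, x * y = y * x := by
  have step1 : ∀ x ∈ K, ∀ y ∈ K.topologicalClosure, x * y = y * x := by
    intro x hx y hy
    have hcl : IsClosed {y : G | x * y = y * x} :=
      isClosed_eq (continuous_const.mul continuous_id) (continuous_id.mul continuous_const)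
    have hsub : ((K : Subgroup G) : Set G) ⊆ {y : G | x * y = y * x} := fun y hy => h x hx y hy
    have hy' : y ∈ _root_.closure ((K : Subgroup G) : Set G) := hy
    exact closure_minimal hsub hcl hy'
  intro x hx y hy
  have hcl : IsClosed {x : G | x * y = y * x} :=
    isClosed_eq (continuous_id.mul continuous_const) (continuous_const.mul continuous_id)
  have hsub : ((K : Subgroup G) : Set G) ⊆ {x : G | x * y = y * x} := fun x hx => step1 x hx y hy
  have hx' : x ∈ _root_.closure ((K : Subgroup G) : Set G) := hx
  exact closure_minimal hsub hcl hx'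

lemma centralizer_isClosed [T2Space G] (x : G) :
    IsClosed ((Subgroup.centralizer {x} : Subgroup G) : Set G) := by
  have : ((Subgroup.centralizer {x} : Subgroup G) : Set G) = {g : G | x * g = g * x} := by
    ext g
    simp [Subgroup.mem_centralizer_iff]
  rw [this]
  exact isClosed_eq (continuous_const.mul continuous_id) (continuous_id.mul continuous_const)

/-- separation by open normal subgroups in a profinite group -/
lemma exists_openNormal [CompactSpace G] [T2Space G] [TotallyDisconnectedSpace G]
    {g : G} (hg : g ≠ 1) :
    ∃ M : Subgroup G, M.Normal ∧ IsOpen (M : Set G) ∧ g ∉ M := by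
  have hU : IsOpen ({g}ᶜ : Set G) := isClosed_singleton.isOpen_compl
  have h1U : (1 : G) ∈ ({g}ᶜ : Set G) := by simp [Ne.symm hg]
  obtain ⟨V, hVclopen, h1V, hVU⟩ := compact_exists_isClopen_in_isOpen hU h1U
  obtain ⟨M, hM⟩ := IsTopologicalGroup.exist_openNormalSubgroup_sub_clopen_nhds_of_one hVclopen h1V
  refine ⟨M.toSubgroup, M.isNormal', M.toOpenSubgroup.isOpen, fun hgM => ?_⟩
  exact (hVU (hM hgM)) rfl

lemma eq_one_of_mem_all [CompactSpace G] [T2Space G] [TotallyDisconnectedSpace G]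
    {g : G} (h : ∀ M : Subgroup G, M.Normal → IsOpen (M : Set G) → g ∈ M) : g = 1 := by
  by_contra hg
  obtain ⟨M, hMn, hMo, hgM⟩ := exists_openNormal hg
  exact hgM (h M hMn hMo)

lemma eq_bot_of_le_all [CompactSpace G] [T2Space G] [TotallyDisconnectedSpace G]
    {K : Subgroup G} (h : ∀ M : Subgroup G, M.Normal → IsOpen (M : Set G) → K ≤ M) : K = ⊥ := by
  refine (Subgroup.eq_bot_iff_forall K).mpr fun x hx => ?_
  exact eq_one_of_mem_all fun M hMn hMo => h M hMn hMo hx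

/-- membership in `primesOf` of a subgroup from divisibility of the cardinality of its image
in a finite continuous quotient -/
lemma mem_primesOf [CompactSpace G] {K N : Subgroup G} (hNn : N.Normal) (hNo : IsOpen (N : Set G))
    {p : ℕ} (hp : p.Prime) (hdvd : p ∣ Nat.card (K.map (QuotientGroup.mk' N))) :
    p ∈ primesOf ↥K := by
  refine ⟨hp, N.subgroupOf K, ?_, ?_, ?_⟩
  · exact Subgroup.normal_comap _
  · have : ((N.subgroupOf K : Subgroup ↥K) : Set ↥K) = (Subtype.val : ↥K → G) ⁻¹' N := by
      rfl
    rw [this]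
    exact hNo.preimage continuous_subtype_val
  · have : (N.subgroupOf K).index = N.relIndex K := rfl
    rw [this, ← QuotientGroup.ker_mk' N, Subgroup.relIndex_ker]
    exact hdvd

/-- order bound: if some p-power power of z lies in an open normal subgroup, then
the `p ^ index` power does -/
lemma pow_index_mem [CompactSpace G] {N : Subgroup G} (hNn : N.Normal) (hNo : IsOpen (N : Set G))
    {p : ℕ} (hp : p.Prime) {z : G} (h : ∃ k, z ^ p ^ k ∈ N) : z ^ p ^ N.index ∈ N := by
  haveI : Finite (G ⧸ N) := N.quotient_finite_of_isOpen hNo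
  obtain ⟨k, hk⟩ := h
  set x : G ⧸ N := QuotientGroup.mk' N z with hxdef
  have hx : x ^ p ^ k = 1 := by
    rw [hxdef, ← map_pow]
    exact (QuotientGroup.eq_one_iff _).mpr hk
  have hord : orderOf x ∣ p ^ k := orderOf_dvd_of_pow_eq_one hx
  obtain ⟨j, hjk, hj⟩ := (Nat.dvd_prime_pow hp).mp hord
  have hcard : orderOf x ∣ N.index := by
    rw [Subgroup.index]
    exact orderOf_dvd_natCard x
  have hindpos : 0 < N.index := by
    rw [Subgroup.index]
    exact Nat.card_pos
  have hple : p ^ j ≤ N.index := Nat.le_of_dvd hindpos (hj ▸ hcard)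
  have hjle : j ≤ N.index := le_trans (le_of_lt (Nat.lt_pow_self (n := j) hp.one_lt)) hple
  have : x ^ p ^ N.index = 1 := by
    apply orderOf_dvd_iff_pow_eq_one.mp
    rw [hj]
    exact pow_dvd_pow p hjle
  rw [hxdef, ← map_pow] at this
  exact (QuotientGroup.eq_one_iff _).mp this




/-- fixed point for a p-element acting on a coset of a normal subgroup of coprime order -/
lemma pfix {H : Type*} [Group H] [Finite H] {p : ℕ} (hp : p.Prime)
    (V : Subgroup H) (hVn : V.Normal) (hpV : ¬ p ∣ Nat.card V)
    {z b : H} (hz : ∃ k, z ^ p ^ k = 1) (hbz : b⁻¹ * (z * b * z⁻¹) ∈ V) :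
    ∃ v ∈ V, z * (b * v) * z⁻¹ = b * v := by
  classical
  -- the subgroup of elements g with b⁻¹ g b g⁻¹ ∈ V
  set W : Subgroup H :=
    { carrier := {g : H | b⁻¹ * (g * b * g⁻¹) ∈ V}
      one_mem' := by simpa using V.one_mem
      mul_mem' := by
        intro g h hg hh
        have key : b⁻¹ * ((g * h) * b * (g * h)⁻¹)
            = (b⁻¹ * (g * b * g⁻¹)) * (g * (b⁻¹ * (h * b * h⁻¹)) * g⁻¹) := by
          group
        rw [Set.mem_setOf_eq, key]
        exact V.mul_mem hg (hVn.conj_mem _ hh g)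
      inv_mem' := by
        intro g hg
        have key : b⁻¹ * (g⁻¹ * b * g) = g⁻¹ * (b⁻¹ * (g * b * g⁻¹))⁻¹ * g := by
          group
        show b⁻¹ * (g⁻¹ * b * (g⁻¹)⁻¹) ∈ V
        rw [inv_inv, key]
        have := V.inv_mem hg
        have h2 := hVn.conj_mem _ this g⁻¹
        simpa using h2 } with hWdef
  have hzW : z ∈ W := hbz
  have hPW : Subgroup.zpowers z ≤ W := (Subgroup.zpowers_le).mpr hzW
  -- the coset b V as a type
  let X := {x : H // b⁻¹ * x ∈ V}
  haveI : Finite X := Subtype.finite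
  -- action of zpowers z on X by conjugation
  let act : ↥(Subgroup.zpowers z) → X → X := fun g x =>
    ⟨(g : H) * (x : H) * (g : H)⁻¹, by
      have hg : (g : H) ∈ W := hPW g.2
      have key : b⁻¹ * ((g : H) * (x : H) * (g : H)⁻¹)
          = (b⁻¹ * ((g : H) * b * (g : H)⁻¹)) * ((g : H) * (b⁻¹ * (x : H)) * (g : H)⁻¹) := by
        group
      rw [key]
      exact V.mul_mem hg (hVn.conj_mem _ x.2 _)⟩
  letI : MulAction ↥(Subgroup.zpowers z) X :=
    { smul := act
      one_smul := fun x => by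
        apply Subtype.ext
        show (1 : H) * (x : H) * (1 : H)⁻¹ = x
        group
      mul_smul := fun g h x => by
        apply Subtype.ext
        show ((g : H) * (h : H)) * (x : H) * ((g : H) * (h : H))⁻¹
          = (g : H) * ((h : H) * (x : H) * (h : H)⁻¹) * (g : H)⁻¹
        group }
  -- zpowers z is a p-group
  obtain ⟨k₀, hk₀⟩ := hz
  have hPp : IsPGroup p ↥(Subgroup.zpowers z) := by
    intro g
    obtain ⟨m, hm⟩ := g.2
    refine ⟨k₀, ?_⟩
    apply Subtype.ext
    show (g : H) ^ p ^ k₀ = 1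
    rw [← hm, ← zpow_natCast, ← zpow_mul, mul_comm, zpow_mul, zpow_natCast, hk₀, one_zpow]
  -- card X = card V
  have hcard : Nat.card X = Nat.card V := by
    apply Nat.card_congr
    exact ⟨fun x => ⟨b⁻¹ * x, x.2⟩, fun v => ⟨b * v, by simp⟩,
      fun x => by apply Subtype.ext; simp, fun v => by apply Subtype.ext; simp⟩
  have hpX : ¬ p ∣ Nat.card X := by rw [hcard]; exact hpV
  haveI : Fact p.Prime := ⟨hp⟩
  obtain ⟨x, hx⟩ := hPp.nonempty_fixed_point_of_prime_not_dvd_card X hpX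
  rw [MulAction.mem_fixedPoints] at hx
  have hfix := hx ⟨z, Subgroup.mem_zpowers z⟩
  have hfix' : z * (x : H) * z⁻¹ = (x : H) := congrArg Subtype.val hfix
  refine ⟨b⁻¹ * (x : H), x.2, ?_⟩
  rw [mul_inv_cancel_left]
  exact hfix'




/-- coprime averaging fixed point for an action on a coset of an abelian normal subgroup -/
lemma avg {H : Type*} [Group H] [Finite H]
    (V Q : Subgroup H) (hVn : V.Normal)
    (hcomm : ∀ x ∈ V, ∀ y ∈ V, x * y = y * x)
    (hcop : Nat.Coprime (Nat.card Q) (Nat.card V))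
    {b : H} (hb : ∀ q ∈ Q, b⁻¹ * (q * b * q⁻¹) ∈ V) :
    ∃ v ∈ V, ∀ q ∈ Q, q * (b * v) * q⁻¹ = b * v := by
  classical
  by_cases hV1 : Nat.card V = 1
  · -- V is trivial
    have hVbot : V = ⊥ := Subgroup.eq_bot_of_card_eq V hV1
    refine ⟨1, V.one_mem, fun q hq => ?_⟩
    have := hb q hq
    rw [hVbot, Subgroup.mem_bot] at this
    have h2 : q * b * q⁻¹ = b := by
      have := congrArg (fun y => b * y) this
      simpa [mul_assoc] using this
    rw [mul_one]
    exact h2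
  letI : CommGroup ↥V :=
    { (inferInstance : Group ↥V) with
      mul_comm := fun x y => Subtype.ext (hcomm x x.2 y y.2) }
  haveI : Fintype ↥Q := Fintype.ofFinite _
  -- conjugation action of Q on V
  let φ : ↥Q → (↥V →* ↥V) := fun q =>
    { toFun := fun v => ⟨(q : H) * (v : H) * (q : H)⁻¹, hVn.conj_mem _ v.2 _⟩
      map_one' := by apply Subtype.ext; simp
      map_mul' := fun v w => by
        apply Subtype.ext
        show (q : H) * ((v : H) * (w : H)) * (q : H)⁻¹
          = ((q : H) * (v : H) * (q : H)⁻¹) * ((q : H) * (w : H) * (q : H)⁻¹)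
        group }
  let δ : ↥Q → ↥V := fun q => ⟨b⁻¹ * ((q : H) * b * (q : H)⁻¹), hb q q.2⟩
  have hcocycle : ∀ q r : ↥Q, δ (q * r) = δ q * φ q (δ r) := by
    intro q r
    apply Subtype.ext
    show b⁻¹ * (((q : H) * (r : H)) * b * ((q : H) * (r : H))⁻¹)
      = (b⁻¹ * ((q : H) * b * (q : H)⁻¹)) * ((q : H) * (b⁻¹ * ((r : H) * b * (r : H)⁻¹)) * (q : H)⁻¹)
    group
  set m := Nat.card ↥Q with hm
  set σ : ↥V := ∏ q : ↥Q, δ q with hσ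
  have key : ∀ q : ↥Q, σ = δ q ^ m * φ q σ := by
    intro q
    have h1 : σ = ∏ r : ↥Q, δ (q * r) := by
      rw [hσ]
      exact (Equiv.prod_comp (Equiv.mulLeft q) δ).symm
    have h2 : ∏ r : ↥Q, δ (q * r) = ∏ r : ↥Q, (δ q * φ q (δ r)) := by
      apply Finset.prod_congr rfl
      intro r _
      exact hcocycle q r
    have h3 : ∏ r : ↥Q, (δ q * φ q (δ r)) = (δ q) ^ m * φ q σ := by
      rw [Finset.prod_mul_distrib, Finset.prod_const, ← map_prod]
      congr 1
      rw [hm, Nat.card_eq_fintype_card, Fintype.card]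
    exact h1.trans (h2.trans h3)
  -- inverse of m mod card V
  have hVpos : 1 < Nat.card ↥V :=
    lt_of_le_of_ne (Nat.one_le_iff_ne_zero.mpr Nat.card_pos.ne') (Ne.symm hV1)
  obtain ⟨m', -, hm'⟩ := Nat.exists_mul_mod_eq_one_of_coprime hcop hVpos
  have hpow : ∀ x : ↥V, x ^ (m * m') = x := by
    intro x
    have h1 : orderOf x ∣ Nat.card ↥V := orderOf_dvd_natCard x
    have h2 : m * m' ≡ 1 [MOD Nat.card ↥V] := by
      show m * m' % Nat.card ↥V = 1 % Nat.card ↥V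
      rw [hm', Nat.mod_eq_of_lt hVpos]
    have h3 : m * m' ≡ 1 [MOD orderOf x] := h2.of_dvd h1
    calc x ^ (m * m') = x ^ 1 := (pow_eq_pow_iff_modEq.mpr h3)
      _ = x := pow_one x
  set s : ↥V := σ ^ m' with hs
  have key2 : ∀ q : ↥Q, δ q * φ q s = s := by
    intro q
    have h1 : φ q s = ((δ q) ^ m)⁻¹ ^ m' * σ ^ m' := by
      rw [hs, map_pow]
      have : φ q σ = ((δ q) ^ m)⁻¹ * σ := eq_inv_mul_of_mul_eq (key q).symm
      rw [this, mul_pow]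
    have h2 : ((δ q) ^ m)⁻¹ ^ m' = (δ q)⁻¹ := by
      rw [inv_pow, ← pow_mul]
      exact congrArg Inv.inv (hpow (δ q))
    rw [h1, h2, hs, ← mul_assoc, mul_inv_cancel, one_mul]
  refine ⟨(s : H), s.2, ?_⟩
  intro q hq
  set q' : ↥Q := ⟨q, hq⟩
  have hδ : q * b * q⁻¹ = b * (δ q' : H) := by
    show q * b * q⁻¹ = b * (b⁻¹ * ((q : H) * b * (q : H)⁻¹))
    group
  have hφ : q * (s : H) * q⁻¹ = ((φ q' s : ↥V) : H) := rfl
  calc q * (b * (s : H)) * q⁻¹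
      = (q * b * q⁻¹) * (q * (s : H) * q⁻¹) := by group
    _ = (b * (δ q' : H)) * ((φ q' s : ↥V) : H) := by rw [hδ, hφ]
    _ = b * ((δ q' * φ q' s : ↥V) : H) := by rw [Subgroup.coe_mul]; group
    _ = b * (s : H) := by rw [key2 q']


/-- construction of a nontrivial p-element-like element in the closure of the powers of a
given nontrivial element of a profinite group -/
lemma p_element [CompactSpace G] [T2Space G] [TotallyDisconnectedSpace G]
    {a₀ : G} (ha : a₀ ≠ 1) :
    ∃ (p : ℕ) (M₁ : Subgroup G) (hM₁n : M₁.Normal) (z : G), p.Prime ∧ IsOpen (M₁ : Set G) ∧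
      p ∣ orderOf ((@QuotientGroup.mk' G _ M₁ hM₁n) a₀) ∧
      z ∈ (Subgroup.zpowers a₀).topologicalClosure ∧ z ∉ M₁ ∧
      ∀ N : Subgroup G, N.Normal → IsOpen (N : Set G) → z ^ p ^ N.index ∈ N := by
  classical
  obtain ⟨M₁, hM₁n, hM₁o, haM₁⟩ := exists_openNormal ha
  haveI := hM₁n
  haveI : Finite (G ⧸ M₁) := M₁.quotient_finite_of_isOpen hM₁o
  set n₁ := orderOf ((QuotientGroup.mk' M₁) a₀) with hn₁
  have hn₁ne : n₁ ≠ 1 := by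
    intro h
    have : (QuotientGroup.mk' M₁) a₀ = 1 := orderOf_eq_one_iff.mp h
    exact haM₁ ((QuotientGroup.eq_one_iff _).mp this)
  obtain ⟨p, hp, hpn₁⟩ := Nat.exists_prime_and_dvd hn₁ne
  set Z₀ : Subgroup G := (Subgroup.zpowers a₀).topologicalClosure with hZ₀
  have hZ₀cl : IsClosed (Z₀ : Set G) := Subgroup.isClosed_topologicalClosure _
  let ι := {N : Subgroup G // N.Normal ∧ IsOpen (N : Set G)}
  haveI : Nonempty ι := ⟨⟨⊤, inferInstance, by rw [Subgroup.coe_top]; exact isOpen_univ⟩⟩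
  let D : ι → Set G := fun N =>
    {z : G | z ∈ Z₀ ∧ z ∉ M₁ ∧ z ^ p ^ (N : Subgroup G).index ∈ (N : Subgroup G)}
  have hDne : ∀ N : ι, (D N).Nonempty := by
    rintro ⟨N, hNn, hNo⟩
    set N' : Subgroup G := N ⊓ M₁ with hN'
    haveI : N.Normal := hNn
    haveI hN'n : N'.Normal := Subgroup.normal_inf_normal N M₁
    have hN'o : IsOpen (N' : Set G) := by
      rw [hN', Subgroup.coe_inf]; exact hNo.inter hM₁o
    haveI : Finite (G ⧸ N') := N'.quotient_finite_of_isOpen hN'o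
    set x := (QuotientGroup.mk' N') a₀ with hx
    set n := orderOf x with hn
    have hN'M₁ : N' ≤ M₁ := inf_le_right
    have hmap : (QuotientGroup.map N' M₁ (MonoidHom.id G) hN'M₁) x
        = (QuotientGroup.mk' M₁) a₀ := rfl
    have hdvd1 : n₁ ∣ n := by
      rw [hn₁, ← hmap, hn]
      exact orderOf_map_dvd _ x
    have hpn : p ∣ n := hpn₁.trans hdvd1
    have hnpos : 0 < n := by
      rw [hn]
      exact orderOf_pos x
    refine ⟨a₀ ^ (ordCompl[p] n), ?_, ?_, ?_⟩
    · refine Subgroup.le_topologicalClosure _ ?_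
      exact Subgroup.npow_mem_zpowers a₀ _
    · intro hmem
      have h1 : ((QuotientGroup.mk' M₁) a₀) ^ (ordCompl[p] n) = 1 := by
        rw [← map_pow]
        exact (QuotientGroup.eq_one_iff _).mpr hmem
      have h2 : n₁ ∣ ordCompl[p] n := orderOf_dvd_of_pow_eq_one h1
      exact Nat.not_dvd_ordCompl hp hnpos.ne' (hpn₁.trans h2)
    · apply pow_index_mem hNn hNo hp
      refine ⟨n.factorization p, ?_⟩
      have h1 : (a₀ ^ ordCompl[p] n) ^ p ^ n.factorization p = a₀ ^ n := by
        rw [← pow_mul, mul_comm, Nat.ordProj_mul_ordCompl_eq_self]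
      rw [h1]
      have h2 : x ^ n = 1 := by rw [hn]; exact pow_orderOf_eq_one x
      have h3 : (QuotientGroup.mk' N') (a₀ ^ n) = 1 := by rw [map_pow]; exact h2
      have h4 : a₀ ^ n ∈ N' := (QuotientGroup.eq_one_iff _).mp h3
      exact (inf_le_left : N ⊓ M₁ ≤ N) h4
  have hDcl : ∀ N : ι, IsClosed (D N) := by
    rintro ⟨N, hNn, hNo⟩
    have h1 : IsClosed {z : G | z ∈ Z₀} := hZ₀cl
    have h2 : IsClosed {z : G | z ∉ M₁} := by
      have : IsOpen {z : G | z ∈ M₁} := hM₁o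
      exact this.isClosed_compl
    have h3 : IsClosed {z : G | z ^ p ^ N.index ∈ N} := by
      have hNcl : IsClosed (N : Set G) := N.isClosed_of_isOpen hNo
      exact hNcl.preimage (continuous_pow (p ^ N.index))
    have heq : D ⟨N, hNn, hNo⟩
        = {z : G | z ∈ Z₀} ∩ ({z : G | z ∉ M₁} ∩ {z : G | z ^ p ^ N.index ∈ N}) := rfl
    rw [heq]
    exact h1.inter (h2.inter h3)
  have hDdir : Directed (· ⊇ ·) D := by
    rintro N₁ N₂
    have hn12 : (N₁.1 ⊓ N₂.1).Normal := by
      haveI := N₁.2.1; haveI := N₂.2.1; exact Subgroup.normal_inf_normal _ _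
    have ho12 : IsOpen ((N₁.1 ⊓ N₂.1 : Subgroup G) : Set G) := by
      rw [Subgroup.coe_inf]; exact N₁.2.2.inter N₂.2.2
    refine ⟨⟨N₁.1 ⊓ N₂.1, hn12, ho12⟩, ?_, ?_⟩
    · rintro z ⟨hz0, hz1, hz2⟩
      exact ⟨hz0, hz1, pow_index_mem N₁.2.1 N₁.2.2 hp ⟨_, (inf_le_left : N₁.1 ⊓ N₂.1 ≤ N₁.1) hz2⟩⟩
    · rintro z ⟨hz0, hz1, hz2⟩
      exact ⟨hz0, hz1, pow_index_mem N₂.2.1 N₂.2.2 hp ⟨_, (inf_le_right : N₁.1 ⊓ N₂.1 ≤ N₂.1) hz2⟩⟩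
  have hDcomp : ∀ N : ι, IsCompact (D N) := fun N => (hDcl N).isCompact
  obtain ⟨z, hz⟩ := IsCompact.nonempty_iInter_of_directed_nonempty_isCompact_isClosed
    D hDdir hDne hDcomp hDcl
  rw [Set.mem_iInter] at hz
  obtain ⟨hz0, hz1, -⟩ := hz ⟨⊤, inferInstance, by rw [Subgroup.coe_top]; exact isOpen_univ⟩
  exact ⟨p, M₁, hM₁n, z, hp, hM₁o, hpn₁, hz0, hz1,
    fun N hNn hNo => (hz ⟨N, hNn, hNo⟩).2.2⟩

section MainInfinite

variable {G : Type*} [Group G] [TopologicalSpace G] [IsTopologicalGroup G]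
  [CompactSpace G] [T2Space G] [TotallyDisconnectedSpace G]

set_option maxHeartbeats 2000000 in
lemma main_infinite
    (B A : Subgroup G) (hBc : IsClosed (B : Set G)) (hBn : B.Normal) (hBnt : B ≠ ⊥)
    (hAc : IsClosed (A : Set G))
    (hcop : primesOf ↥A ∩ primesOf ↥B = ∅)
    (d : ℕ) (hCA : IsCA G d) (hinf : Infinite ↥A) :
    (∃ A₀ : Subgroup ↥A, IsOpen (A₀ : Set ↥A) ∧ SolubleOfLength ↥A₀ d) ∧
      SolubleOfLength ↥B d := by
  classical
  haveI hAcomp : CompactSpace ↥A := isCompact_iff_compactSpace.mp hAc.isCompact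
  -- disjointness of prime sets
  have hdisj : ∀ p : ℕ, p ∈ primesOf ↥A → p ∉ primesOf ↥B := by
    intro p hA hB
    have : p ∈ primesOf ↥A ∩ primesOf ↥B := ⟨hA, hB⟩
    rw [hcop] at this
    exact this
  -- every open normal subgroup meets A nontrivially
  have hAMne : ∀ M' : Subgroup G, IsOpen (M' : Set G) →
      ∃ a₀, a₀ ∈ A ⊓ M' ∧ a₀ ≠ 1 := by
    intro M' hM'o
    by_contra hcon
    push_neg at hcon
    set K : Subgroup ↥A := M'.subgroupOf A with hK
    have hKo : IsOpen (K : Set ↥A) := by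
      have : (K : Set ↥A) = (Subtype.val : ↥A → G) ⁻¹' M' := rfl
      rw [this]
      exact hM'o.preimage continuous_subtype_val
    haveI : Finite (↥A ⧸ K) := K.quotient_finite_of_isOpen hKo
    haveI : Subsingleton ↥K := by
      constructor
      intro x y
      have hx : ((x : ↥A) : G) = 1 := hcon _ ⟨(x : ↥A).2, x.2⟩
      have hy : ((y : ↥A) : G) = 1 := hcon _ ⟨(y : ↥A).2, y.2⟩
      apply Subtype.ext; apply Subtype.ext
      rw [hx, hy]
    haveI : Finite ↥K := Finite.of_subsingleton
    haveI : Finite ↥A := Finite.of_equiv _ (Subgroup.groupEquivQuotientProdSubgroup (s := K)).symm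
    exact not_finite ↥A
  -- THE KEY: the d-th abstract derived subgroup of B is contained in every open normal subgroup
  have key : ∀ M' : Subgroup G, M'.Normal → IsOpen (M' : Set G) → agds B d ≤ M' := by
    intro M' hM'n hM'o
    haveI := hM'n
    obtain ⟨a₀, ha₀mem, ha₀ne⟩ := hAMne M' hM'o
    obtain ⟨p, M₁, hM₁n, z, hp, hM₁o, hpord, hzZ, hzM₁, hzpow⟩ := p_element ha₀ne
    haveI := hM₁n
    have hzA : z ∈ A ⊓ M' := by
      have hle : (Subgroup.zpowers a₀).topologicalClosure ≤ A ⊓ M' := by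
        apply Subgroup.topologicalClosure_minimal
        · exact (Subgroup.zpowers_le).mpr ha₀mem
        · rw [Subgroup.coe_inf]
          exact hAc.inter (M'.isClosed_of_isOpen hM'o)
      exact hle hzZ
    have hzne : z ≠ 1 := fun h => hzM₁ (h ▸ M₁.one_mem)
    have hzM' : z ∈ M' := (inf_le_right : A ⊓ M' ≤ M') hzA
    -- p is a prime of A, hence not one of B
    have hpA : p ∈ primesOf ↥A := by
      apply mem_primesOf hM₁n hM₁o hp
      haveI : Finite (G ⧸ M₁) := M₁.quotient_finite_of_isOpen hM₁o
      have hmem : (QuotientGroup.mk' M₁) a₀ ∈ A.map (QuotientGroup.mk' M₁) :=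
        Subgroup.mem_map_of_mem _ ((inf_le_left : A ⊓ M' ≤ A) ha₀mem)
      calc p ∣ orderOf ((QuotientGroup.mk' M₁) a₀) := hpord
        _ = orderOf (⟨_, hmem⟩ : ↥(A.map (QuotientGroup.mk' M₁))) := (orderOf_mk _ hmem).symm
        _ ∣ Nat.card ↥(A.map (QuotientGroup.mk' M₁)) := orderOf_dvd_natCard _
    have hpB : p ∉ primesOf ↥B := hdisj p hpA
    -- coverage of B by the centralizer of z modulo M'
    have cover : ∀ b ∈ B, ∃ c ∈ B, b⁻¹ * c ∈ M' ∧ z * c = c * z := by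
      intro b hb
      let ι := {N : Subgroup G // N.Normal ∧ IsOpen (N : Set G)}
      haveI : Nonempty ι := ⟨⟨⊤, inferInstance, by rw [Subgroup.coe_top]; exact isOpen_univ⟩⟩
      let F : ι → Set G := fun N =>
        {c : G | c ∈ B ∧ b⁻¹ * c ∈ M' ∧ z * c * z⁻¹ * c⁻¹ ∈ N.1}
      have hFcl : ∀ N : ι, IsClosed (F N) := by
        rintro ⟨N, hNn, hNo⟩
        have h1 : IsClosed {c : G | c ∈ B} := hBc
        have h2 : IsClosed {c : G | b⁻¹ * c ∈ M'} :=
          (M'.isClosed_of_isOpen hM'o).preimage (continuous_const.mul continuous_id)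
        have h3 : IsClosed {c : G | z * c * z⁻¹ * c⁻¹ ∈ N} := by
          have hcont : Continuous fun c : G => z * c * z⁻¹ * c⁻¹ := by continuity
          exact (N.isClosed_of_isOpen hNo).preimage hcont
        exact h1.inter (h2.inter h3)
      have hFne : ∀ N : ι, (F N).Nonempty := by
        rintro ⟨N, hNn, hNo⟩
        haveI := hNn
        have hNtn : (N ⊓ M').Normal := Subgroup.normal_inf_normal N M'
        haveI := hNtn
        have hNto : IsOpen ((N ⊓ M' : Subgroup G) : Set G) := by
          rw [Subgroup.coe_inf]; exact hNo.inter hM'o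
        haveI : Finite (G ⧸ (N ⊓ M' : Subgroup G)) :=
          (N ⊓ M' : Subgroup G).quotient_finite_of_isOpen hNto
        set π := QuotientGroup.mk' (N ⊓ M' : Subgroup G) with hπ
        haveI : ((B ⊓ M').map π).Normal := by
          haveI : (B ⊓ M').Normal := Subgroup.normal_inf_normal B M'
          exact Subgroup.Normal.map inferInstance π (QuotientGroup.mk'_surjective _)
        have hpV : ¬ p ∣ Nat.card ((B ⊓ M').map π) := by
          intro hdvd
          apply hpB
          apply mem_primesOf hNtn hNto hp
          exact hdvd.trans (Subgroup.card_dvd_of_le (Subgroup.map_mono inf_le_left))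
        have hzk : ∃ k, (π z) ^ p ^ k = 1 :=
          ⟨(N ⊓ M' : Subgroup G).index, by
            rw [← map_pow]
            exact (QuotientGroup.eq_one_iff _).mpr (hzpow _ hNtn hNto)⟩
        have hGmem : b⁻¹ * (z * b * z⁻¹) ∈ B ⊓ M' := by
          constructor
          · exact B.mul_mem (B.inv_mem hb) (hBn.conj_mem b hb z)
          · have h1 : b⁻¹ * z * b ∈ M' := by
              have := hM'n.conj_mem z hzM' b⁻¹
              simpa using this
            have heq : b⁻¹ * (z * b * z⁻¹) = (b⁻¹ * z * b) * z⁻¹ := by group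
            rw [heq]
            exact M'.mul_mem h1 (M'.inv_mem hzM')
        have hbz : (π b)⁻¹ * (π z * π b * (π z)⁻¹) ∈ (B ⊓ M').map π := by
          have heq : (π b)⁻¹ * (π z * π b * (π z)⁻¹) = π (b⁻¹ * (z * b * z⁻¹)) := by
            simp [map_mul]
          rw [heq]
          exact Subgroup.mem_map_of_mem _ hGmem
        obtain ⟨v, hvV, hfix⟩ := pfix hp _ inferInstance hpV hzk hbz
        obtain ⟨u, huBM', hu⟩ := hvV
        refine ⟨b * u, ⟨B.mul_mem hb huBM'.1, by simpa using huBM'.2, ?_⟩⟩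
        have hc : π (b * u) = π b * v := by rw [map_mul, hu]
        have hcomm : π z * π (b * u) * (π z)⁻¹ = π (b * u) := by rw [hc]; exact hfix
        have hone : π (z * (b * u) * z⁻¹ * (b * u)⁻¹) = 1 := by
          rw [map_mul, map_mul, map_mul, map_inv, map_inv, hcomm]
          group
        have hmem : z * (b * u) * z⁻¹ * (b * u)⁻¹ ∈ (N ⊓ M' : Subgroup G) :=
          (QuotientGroup.eq_one_iff _).mp hone
        exact (inf_le_left : N ⊓ M' ≤ N) hmem
      have hFdir : Directed (· ⊇ ·) F := by
        rintro N₁ N₂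
        have hn12 : (N₁.1 ⊓ N₂.1).Normal := by
          haveI := N₁.2.1; haveI := N₂.2.1; exact Subgroup.normal_inf_normal _ _
        have ho12 : IsOpen ((N₁.1 ⊓ N₂.1 : Subgroup G) : Set G) := by
          rw [Subgroup.coe_inf]; exact N₁.2.2.inter N₂.2.2
        refine ⟨⟨N₁.1 ⊓ N₂.1, hn12, ho12⟩, ?_, ?_⟩
        · rintro c ⟨hc1, hc2, hc3⟩
          exact ⟨hc1, hc2, (inf_le_left : N₁.1 ⊓ N₂.1 ≤ N₁.1) hc3⟩
        · rintro c ⟨hc1, hc2, hc3⟩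
          exact ⟨hc1, hc2, (inf_le_right : N₁.1 ⊓ N₂.1 ≤ N₂.1) hc3⟩
      obtain ⟨c, hc⟩ := IsCompact.nonempty_iInter_of_directed_nonempty_isCompact_isClosed
        F hFdir hFne (fun N => (hFcl N).isCompact) hFcl
      rw [Set.mem_iInter] at hc
      obtain ⟨hcB, hcM', -⟩ := hc ⟨⊤, inferInstance, by rw [Subgroup.coe_top]; exact isOpen_univ⟩
      have hcz : z * c * z⁻¹ * c⁻¹ = 1 :=
        eq_one_of_mem_all fun M hMn hMo => (hc ⟨M, hMn, hMo⟩).2.2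
      refine ⟨c, hcB, hcM', ?_⟩
      have hcz' : ⁅z, c⁆ = 1 := by rw [commutatorElement_def]; exact hcz
      exact commutatorElement_eq_one_iff_mul_comm.mp hcz'
    -- centralizer of z is soluble, transfer solubility to the image of B
    have hCsol : SolubleOfLength ↥(Subgroup.centralizer ({z} : Set G)) d := hCA z hzne
    have hCag : agds (Subgroup.centralizer ({z} : Set G)) d = ⊥ := by
      have h1 : agds (Subgroup.centralizer ({z} : Set G)) d
          ≤ gcds (Subgroup.centralizer ({z} : Set G)) d := agds_le_gcds _ d
      rw [(soluble_iff_gcds (centralizer_isClosed z)).mp hCsol] at h1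
      exact le_bot_iff.mp h1
    set π' := QuotientGroup.mk' M' with hπ'
    have hsub : B.map π' ≤ (Subgroup.centralizer ({z} : Set G)).map π' := by
      rintro - ⟨b, hb, rfl⟩
      obtain ⟨c, hcB, hcM', hcz⟩ := cover b hb
      refine ⟨c, ?_, ?_⟩
      · refine Subgroup.mem_centralizer_iff.mpr ?_
        intro y hy
        rw [Set.mem_singleton_iff] at hy
        subst hy
        exact hcz
      · show π' c = π' b
        have h2 : c⁻¹ * b ∈ M' := by
          have := M'.inv_mem hcM'
          simpa using this
        rw [QuotientGroup.mk'_eq_mk']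
        exact ⟨c⁻¹ * b, h2, by group⟩
    have hchase : (agds B d).map π' = ⊥ := by
      have h1 : (agds B d).map π' = agds (B.map π') d := agds_map π' B d
      have h2 : agds (B.map π') d ≤ agds ((Subgroup.centralizer ({z} : Set G)).map π') d :=
        agds_mono hsub d
      have h3 : agds ((Subgroup.centralizer ({z} : Set G)).map π') d
          = (agds (Subgroup.centralizer ({z} : Set G)) d).map π' := (agds_map π' _ d).symm
      rw [h1]
      rw [h3, hCag, Subgroup.map_bot] at h2
      exact le_bot_iff.mp h2
    have hker := (Subgroup.map_eq_bot_iff _).mp hchase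
    rwa [QuotientGroup.ker_mk'] at hker
  have hagdsB : agds B d = ⊥ := eq_bot_of_le_all key
  -- Part 2 : B is soluble of derived length at most d
  have hsolB : SolubleOfLength ↥B d := by
    rw [soluble_iff_gcds hBc]
    have h1 : gcds B d ≤ (agds B d).topologicalClosure := gcds_le_topCl_agds B d
    rw [hagdsB, topCl_bot] at h1
    exact le_bot_iff.mp h1
  refine ⟨?_, hsolB⟩
  -- Part 1 : find the last nontrivial term of the derived series of B
  have hex : ∃ k, agds B k ≠ ⊥ ∧ agds B (k + 1) = ⊥ := by
    have hexists : ∃ j, agds B j = ⊥ := ⟨d, hagdsB⟩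
    have hjspec : agds B (Nat.find hexists) = ⊥ := Nat.find_spec hexists
    have hjpos : Nat.find hexists ≠ 0 := by
      intro h
      rw [h] at hjspec
      exact hBnt hjspec
    refine ⟨Nat.find hexists - 1, ?_, ?_⟩
    · exact Nat.find_min hexists (Nat.pred_lt hjpos)
    · have heq : Nat.find hexists - 1 + 1 = Nat.find hexists := by omega
      rw [heq]
      exact hjspec
  obtain ⟨k, hkne, hk1⟩ := hex
  set W := (agds B k).topologicalClosure with hWdef
  have hWcl : IsClosed (W : Set G) := Subgroup.isClosed_topologicalClosure _
  have hWcomm : ∀ x ∈ W, ∀ y ∈ W, x * y = y * x := by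
    apply comm_topCl
    intro x hx y hy
    have h1 : ⁅x, y⁆ ∈ (⁅agds B k, agds B k⁆ : Subgroup G) :=
      Subgroup.commutator_mem_commutator hx hy
    have h2 : (⁅agds B k, agds B k⁆ : Subgroup G) = ⊥ := hk1
    rw [h2, Subgroup.mem_bot] at h1
    exact commutatorElement_eq_one_iff_mul_comm.mp h1
  haveI hWn : W.Normal := by
    haveI := agds_normal hBn k
    exact Subgroup.is_normal_topologicalClosure _
  have hWB : W ≤ B := Subgroup.topologicalClosure_minimal _ (agds_le_self B k) hBc
  have hWne : W ≠ ⊥ := by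
    intro h
    exact hkne (le_bot_iff.mp (h ▸ Subgroup.le_topologicalClosure (agds B k)))
  obtain ⟨w₀, hw₀W, hw₀ne⟩ := (Subgroup.bot_or_exists_ne_one W).resolve_left hWne
  obtain ⟨M₀, hM₀n, hM₀o, hw₀M₀⟩ := exists_openNormal hw₀ne
  haveI := hM₀n
  -- compactness : find a nontrivial element of W centralized by A ⊓ M₀
  have hfixed : ∃ w, w ∈ W ∧ w ∉ M₀ ∧ ∀ a ∈ (A ⊓ M₀ : Subgroup G), a * w = w * a := by
    let ι := {N : Subgroup G // N.Normal ∧ IsOpen (N : Set G)}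
    haveI : Nonempty ι := ⟨⟨⊤, inferInstance, by rw [Subgroup.coe_top]; exact isOpen_univ⟩⟩
    let F : ι → Set G := fun N =>
      {w : G | w ∈ W ∧ w₀⁻¹ * w ∈ M₀ ∧ ∀ a ∈ (A ⊓ M₀ : Subgroup G), a * w * a⁻¹ * w⁻¹ ∈ N.1}
    have hFcl : ∀ N : ι, IsClosed (F N) := by
      rintro ⟨N, hNn, hNo⟩
      have h1 : IsClosed {w : G | w ∈ W} := hWcl
      have h2 : IsClosed {w : G | w₀⁻¹ * w ∈ M₀} :=
        (M₀.isClosed_of_isOpen hM₀o).preimage (continuous_const.mul continuous_id)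
      have h3 : IsClosed {w : G | ∀ a ∈ (A ⊓ M₀ : Subgroup G), a * w * a⁻¹ * w⁻¹ ∈ N} := by
        have : {w : G | ∀ a ∈ (A ⊓ M₀ : Subgroup G), a * w * a⁻¹ * w⁻¹ ∈ N}
            = ⋂ (a : G) (_ : a ∈ (A ⊓ M₀ : Subgroup G)), {w : G | a * w * a⁻¹ * w⁻¹ ∈ N} := by
          ext w
          simp only [Set.mem_iInter, Set.mem_setOf_eq]
        rw [this]
        refine isClosed_iInter fun a => isClosed_iInter fun _ => ?_
        have hcont : Continuous fun w : G => a * w * a⁻¹ * w⁻¹ := by continuity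
        exact (N.isClosed_of_isOpen hNo).preimage hcont
      exact h1.inter (h2.inter h3)
    have hFne : ∀ N : ι, (F N).Nonempty := by
      rintro ⟨N, hNn, hNo⟩
      haveI := hNn
      have hNtn : (N ⊓ M₀).Normal := Subgroup.normal_inf_normal N M₀
      haveI := hNtn
      have hNto : IsOpen ((N ⊓ M₀ : Subgroup G) : Set G) := by
        rw [Subgroup.coe_inf]; exact hNo.inter hM₀o
      haveI : Finite (G ⧸ (N ⊓ M₀ : Subgroup G)) :=
        (N ⊓ M₀ : Subgroup G).quotient_finite_of_isOpen hNto
      set π := QuotientGroup.mk' (N ⊓ M₀ : Subgroup G) with hπ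
      have hWM₀n : (W ⊓ M₀).Normal := Subgroup.normal_inf_normal W M₀
      haveI : ((W ⊓ M₀).map π).Normal :=
        Subgroup.Normal.map hWM₀n π (QuotientGroup.mk'_surjective _)
      have hVcomm : ∀ x ∈ (W ⊓ M₀).map π, ∀ y ∈ (W ⊓ M₀).map π, x * y = y * x := by
        rintro - ⟨u, hu, rfl⟩ - ⟨u', hu', rfl⟩
        rw [← map_mul, ← map_mul]
        exact congrArg π (hWcomm u hu.1 u' hu'.1)
      have hQVcop : Nat.Coprime (Nat.card ((A ⊓ M₀).map π)) (Nat.card ((W ⊓ M₀).map π)) := by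
        by_contra hg
        obtain ⟨q, hq, hqd⟩ := Nat.exists_prime_and_dvd hg
        have hqA : q ∈ primesOf ↥A := by
          apply mem_primesOf hNtn hNto hq
          exact (hqd.trans (Nat.gcd_dvd_left _ _)).trans
            (Subgroup.card_dvd_of_le (Subgroup.map_mono inf_le_left))
        have hqB : q ∈ primesOf ↥B := by
          apply mem_primesOf hNtn hNto hq
          exact (hqd.trans (Nat.gcd_dvd_right _ _)).trans
            (Subgroup.card_dvd_of_le (Subgroup.map_mono (le_trans inf_le_left hWB)))
        exact hdisj q hqA hqB
      have hbmem : ∀ q ∈ (A ⊓ M₀).map π,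
          (π w₀)⁻¹ * (q * π w₀ * q⁻¹) ∈ (W ⊓ M₀).map π := by
        rintro - ⟨a, haAM₀, rfl⟩
        have hGmem : w₀⁻¹ * (a * w₀ * a⁻¹) ∈ W ⊓ M₀ := by
          constructor
          · exact W.mul_mem (W.inv_mem hw₀W) (hWn.conj_mem w₀ hw₀W a)
          · have h1 : w₀⁻¹ * a * w₀ ∈ M₀ := by
              have := hM₀n.conj_mem a haAM₀.2 w₀⁻¹
              simpa using this
            have heq : w₀⁻¹ * (a * w₀ * a⁻¹) = (w₀⁻¹ * a * w₀) * a⁻¹ := by group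
            rw [heq]
            exact M₀.mul_mem h1 (M₀.inv_mem haAM₀.2)
        have heq : (π w₀)⁻¹ * (π a * π w₀ * (π a)⁻¹) = π (w₀⁻¹ * (a * w₀ * a⁻¹)) := by
          simp [map_mul]
        rw [heq]
        exact Subgroup.mem_map_of_mem _ hGmem
      obtain ⟨v, hvV, hfix⟩ := avg ((W ⊓ M₀).map π) ((A ⊓ M₀).map π)
        inferInstance hVcomm hQVcop hbmem
      obtain ⟨u, huWM₀, hu⟩ := hvV
      refine ⟨w₀ * u, ⟨W.mul_mem hw₀W huWM₀.1, by simpa using huWM₀.2, ?_⟩⟩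
      intro a haAM₀
      have hq : π a ∈ (A ⊓ M₀).map π := Subgroup.mem_map_of_mem _ haAM₀
      have hfx := hfix (π a) hq
      have hcomm : π a * π (w₀ * u) * (π a)⁻¹ = π (w₀ * u) := by
        rw [map_mul, hu]
        exact hfx
      have hone : π (a * (w₀ * u) * a⁻¹ * (w₀ * u)⁻¹) = 1 := by
        rw [map_mul, map_mul, map_mul, map_inv, map_inv, hcomm]
        group
      have hmem : a * (w₀ * u) * a⁻¹ * (w₀ * u)⁻¹ ∈ (N ⊓ M₀ : Subgroup G) :=
        (QuotientGroup.eq_one_iff _).mp hone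
      exact (inf_le_left : N ⊓ M₀ ≤ N) hmem
    have hFdir : Directed (· ⊇ ·) F := by
      rintro N₁ N₂
      have hn12 : (N₁.1 ⊓ N₂.1).Normal := by
        haveI := N₁.2.1; haveI := N₂.2.1; exact Subgroup.normal_inf_normal _ _
      have ho12 : IsOpen ((N₁.1 ⊓ N₂.1 : Subgroup G) : Set G) := by
        rw [Subgroup.coe_inf]; exact N₁.2.2.inter N₂.2.2
      refine ⟨⟨N₁.1 ⊓ N₂.1, hn12, ho12⟩, ?_, ?_⟩
      · rintro w ⟨h1, h2, h3⟩
        exact ⟨h1, h2, fun a ha => (inf_le_left : N₁.1 ⊓ N₂.1 ≤ N₁.1) (h3 a ha)⟩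
      · rintro w ⟨h1, h2, h3⟩
        exact ⟨h1, h2, fun a ha => (inf_le_right : N₁.1 ⊓ N₂.1 ≤ N₂.1) (h3 a ha)⟩
    obtain ⟨w, hw⟩ := IsCompact.nonempty_iInter_of_directed_nonempty_isCompact_isClosed
      F hFdir hFne (fun N => (hFcl N).isCompact) hFcl
    rw [Set.mem_iInter] at hw
    obtain ⟨hwW, hwM₀, -⟩ := hw ⟨⊤, inferInstance, by rw [Subgroup.coe_top]; exact isOpen_univ⟩
    refine ⟨w, hwW, ?_, ?_⟩
    · intro hwmem
      exact hw₀M₀ (by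
        have : w₀ = w * (w₀⁻¹ * w)⁻¹ := by group
        rw [this]
        exact M₀.mul_mem hwmem (M₀.inv_mem hwM₀))
    · intro a ha
      have h1 : a * w * a⁻¹ * w⁻¹ = 1 :=
        eq_one_of_mem_all fun M hMn hMo => (hw ⟨M, hMn, hMo⟩).2.2 a ha
      have h2 : ⁅a, w⁆ = 1 := by rw [commutatorElement_def]; exact h1
      exact commutatorElement_eq_one_iff_mul_comm.mp h2
  obtain ⟨w, hwW, hwM₀, hwcent⟩ := hfixed
  have hwne : w ≠ 1 := fun h => hwM₀ (h ▸ M₀.one_mem)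
  have hle : A ⊓ M₀ ≤ Subgroup.centralizer ({w} : Set G) := by
    intro a ha
    refine Subgroup.mem_centralizer_iff.mpr ?_
    intro y hy
    rw [Set.mem_singleton_iff] at hy
    subst hy
    exact (hwcent a ha).symm
  have hAM₀cl : IsClosed ((A ⊓ M₀ : Subgroup G) : Set G) := by
    rw [Subgroup.coe_inf]
    exact hAc.inter (M₀.isClosed_of_isOpen hM₀o)
  have hsolAM : SolubleOfLength ↥(A ⊓ M₀ : Subgroup G) d := by
    rw [soluble_iff_gcds hAM₀cl]
    have h1 : gcds (A ⊓ M₀) d ≤ gcds (Subgroup.centralizer ({w} : Set G)) d := gcds_mono hle d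
    rw [(soluble_iff_gcds (centralizer_isClosed w)).mp (hCA w hwne)] at h1
    exact le_bot_iff.mp h1
  refine ⟨M₀.subgroupOf A, ?_, ?_⟩
  · have : ((M₀.subgroupOf A : Subgroup ↥A) : Set ↥A) = (Subtype.val : ↥A → G) ⁻¹' M₀ := rfl
    rw [this]
    exact hM₀o.preimage continuous_subtype_val
  · refine soluble_of_injective
      (K := ↥(A ⊓ M₀ : Subgroup G))
      ({ toFun := fun x => ⟨((x : ↥A) : G), ⟨(x : ↥A).2, x.2⟩⟩
         map_one' := rfl
         map_mul' := fun x y => rfl } : ↥(M₀.subgroupOf A) →* ↥(A ⊓ M₀ : Subgroup G))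
      ?_ ?_ hsolAM
    · exact Continuous.subtype_mk (continuous_subtype_val.comp continuous_subtype_val) _
    · intro x y h
      have := congrArg (fun t : ↥(A ⊓ M₀ : Subgroup G) => (t : G)) h
      exact Subtype.ext (Subtype.ext this)

end MainInfinite

end CAdAux

end CAdAuxSection

/-- Lemma 2.4, second part: if moreover `G` is a `CA_d`-group, then `A` has an open subgroup
soluble of derived length at most `d`, and if `A` is infinite then `B` is soluble of derived
length at most `d`. -/
theorem product_coprime_CAd_virtually_soluble
    (G : Type*) [Group G] [TopologicalSpace G] [IsTopologicalGroup G]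
    [CompactSpace G] [T2Space G] [TotallyDisconnectedSpace G]
    (B A : Subgroup G) (hBc : IsClosed (B : Set G)) (hBn : B.Normal) (hBnt : B ≠ ⊥)
    (hAc : IsClosed (A : Set G))
    (hprod : (B : Set G) * (A : Set G) = Set.univ)
    (hcop : primesOf ↥A ∩ primesOf ↥B = ∅)
    (d : ℕ) (hd : 1 ≤ d) (hCA : IsCA G d) :
    (∃ A₀ : Subgroup ↥A, IsOpen (A₀ : Set ↥A) ∧ SolubleOfLength ↥A₀ d) ∧
      (Infinite ↥A → SolubleOfLength ↥B d) := by
  rcases finite_or_infinite ↥A with hfin | hinf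
  · refine ⟨⟨⊥, ?_, ?_⟩, fun hinf => absurd hfin (not_finite_iff_infinite.mpr hinf)⟩
    · haveI := hfin
      exact isOpen_discrete _
    · haveI : Subsingleton ↥(⊥ : Subgroup ↥A) :=
        ⟨fun a b => Subtype.ext (by rw [Subgroup.mem_bot.mp a.2, Subgroup.mem_bot.mp b.2])⟩
      show closedDerivedSeries ↥(⊥ : Subgroup ↥A) d = ⊥
      apply Subgroup.ext
      intro x
      have hx : x = 1 := Subsingleton.elim x 1
      subst hx
      simp only [Subgroup.mem_bot]
      exact iff_of_true (Subgroup.one_mem _) trivial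
  · obtain ⟨h1, h2⟩ := CAdAux.main_infinite B A hBc hBn hBnt hAc hcop d hCA hinf
    exact ⟨h1, fun _ => h2⟩
end

section
/- Let G be a prosoluble profinite group that contains a soluble subgroup of finite index. Then G is soluble. -/
section Aux

variable {G : Type*} [Group G] [TopologicalSpace G] [IsTopologicalGroup G]

lemma tcMono {A B : Subgroup G} (h : A ≤ B) :
    A.topologicalClosure ≤ B.topologicalClosure := by
  intro x hx
  have : x ∈ closure (A : Set G) := hx
  exact closure_mono (by exact_mod_cast h : (A : Set G) ⊆ B) this

theorem map_closedDerivedSeries_le {H : Type*} [Group H] [TopologicalSpace H]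
    [IsTopologicalGroup H] (f : G →* H) (hf : Continuous f) :
    ∀ n, (closedDerivedSeries G n).map f ≤ closedDerivedSeries H n
  | 0 => le_top
  | (n + 1) => by
    have ih := map_closedDerivedSeries_le f hf n
    show Subgroup.map f (⁅closedDerivedSeries G n, closedDerivedSeries G n⁆.topologicalClosure)
      ≤ (⁅closedDerivedSeries H n, closedDerivedSeries H n⁆).topologicalClosure
    have h1 : Subgroup.map f (⁅closedDerivedSeries G n, closedDerivedSeries G n⁆.topologicalClosure)
        ≤ (Subgroup.map f ⁅closedDerivedSeries G n, closedDerivedSeries G n⁆).topologicalClosure := by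
      refine SetLike.coe_subset_coe.mp ?_
      rw [Subgroup.coe_map, Subgroup.topologicalClosure_coe, Subgroup.topologicalClosure_coe,
        Subgroup.coe_map]
      exact image_closure_subset_closure_image hf
    refine h1.trans ?_
    rw [Subgroup.map_commutator]
    exact tcMono (Subgroup.commutator_mono ih ih)

lemma map_subtype_topologicalClosure {K : Subgroup G} (hK : IsClosed (K : Set G))
    (S : Subgroup K) :
    (S.map K.subtype).topologicalClosure = S.topologicalClosure.map K.subtype := by
  refine SetLike.coe_injective ?_
  rw [Subgroup.topologicalClosure_coe, Subgroup.coe_map, Subgroup.coe_map,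
    Subgroup.topologicalClosure_coe, Subgroup.coe_subtype]
  exact hK.isClosedEmbedding_subtypeVal.closure_image_eq (S : Set K)

end Aux

/-- A prosoluble profinite group containing a soluble (closed) subgroup of finite index is
soluble. -/
theorem prosoluble_virtually_soluble_is_soluble
    (G : Type*) [Group G] [TopologicalSpace G] [IsTopologicalGroup G]
    [CompactSpace G] [T2Space G] [TotallyDisconnectedSpace G]
    (hpro : Prosoluble G)
    (H : Subgroup G) (hHc : IsClosed (H : Set G)) (hfin : H.index ≠ 0)
    (hHsol : Soluble ↥H) :
    Soluble G := by
  haveI : H.FiniteIndex := ⟨hfin⟩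
  set K := H.normalCore with hKdef
  haveI : K.Normal := H.normalCore_normal
  have hKc : IsClosed (K : Set G) := H.normalCore_isClosed hHc
  have hKo : IsOpen (K : Set G) := K.isOpen_of_isClosed_of_finiteIndex hKc
  have hsolQ : IsSolvable (G ⧸ K) := hpro K hKo
  obtain ⟨m, hm⟩ := hsolQ.solvable
  -- Step 1: closedDerivedSeries G m ≤ K
  have key : ∀ i, closedDerivedSeries G i ≤
      (derivedSeries (G ⧸ K) i).comap (QuotientGroup.mk' K) := by
    intro i
    induction i with
    | zero => simp [closedDerivedSeries]
    | succ i ih =>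
      have hKle : K ≤ (derivedSeries (G ⧸ K) (i + 1)).comap (QuotientGroup.mk' K) := by
        intro x hx
        have h1 : QuotientGroup.mk' K x = 1 := (QuotientGroup.eq_one_iff x).mpr hx
        rw [Subgroup.mem_comap, h1]
        exact Subgroup.one_mem _
      have hcomm : ⁅closedDerivedSeries G i, closedDerivedSeries G i⁆ ≤
          (derivedSeries (G ⧸ K) (i + 1)).comap (QuotientGroup.mk' K) := by
        refine Subgroup.commutator_le.mpr fun g₁ h₁ g₂ h₂ => ?_
        rw [Subgroup.mem_comap, map_commutatorElement]
        exact Subgroup.commutator_mem_commutator (ih h₁) (ih h₂)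
      have hcl : IsClosed (((derivedSeries (G ⧸ K) (i + 1)).comap
          (QuotientGroup.mk' K) : Subgroup G) : Set G) :=
        Subgroup.isClosed_of_isOpen _ (Subgroup.isOpen_mono hKle hKo)
      exact Subgroup.topologicalClosure_minimal _ hcomm hcl
  have hGm : closedDerivedSeries G m ≤ K := by
    have h := key m
    rwa [hm, MonoidHom.comap_bot, QuotientGroup.ker_mk'] at h
  -- Step 2: K is soluble of length d
  obtain ⟨d, hd⟩ := hHsol
  have hKsol : closedDerivedSeries (↥K) d = ⊥ := by
    have hmap := map_closedDerivedSeries_le (Subgroup.inclusion H.normalCore_le)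
      (continuous_inclusion H.normalCore_le) d
    rw [hd] at hmap
    have hinj : Function.Injective (Subgroup.inclusion H.normalCore_le) :=
      Subgroup.inclusion_injective _
    rw [eq_bot_iff]
    intro x hx
    have : Subgroup.inclusion H.normalCore_le x ∈ (⊥ : Subgroup H) :=
      hmap (Subgroup.mem_map_of_mem _ hx)
    rw [Subgroup.mem_bot] at this ⊢
    exact hinj (by simpa using this)
  -- Step 3: combine
  have comb : ∀ i, closedDerivedSeries G (m + i) ≤
      (closedDerivedSeries (↥K) i).map K.subtype := by
    intro i
    induction i with
    | zero =>
      show closedDerivedSeries G m ≤ Subgroup.map K.subtype ⊤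
      rwa [← Subgroup.range_subtype K, MonoidHom.range_eq_map] at hGm
    | succ i ih =>
      show (⁅closedDerivedSeries G (m + i), closedDerivedSeries G (m + i)⁆).topologicalClosure ≤
        Subgroup.map K.subtype
          ((⁅closedDerivedSeries (↥K) i, closedDerivedSeries (↥K) i⁆).topologicalClosure)
      rw [← map_subtype_topologicalClosure hKc]
      refine Subgroup.topologicalClosure_minimal _
        (le_trans ?_ (Subgroup.le_topologicalClosure _))
        (Subgroup.isClosed_topologicalClosure _)
      exact le_trans (Subgroup.commutator_mono ih ih)
        (le_of_eq (Subgroup.map_commutator _ _ _).symm)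
  refine ⟨m + d, ?_⟩
  have h := comb d
  rw [hKsol, Subgroup.map_bot] at h
  exact le_bot_iff.mp h
end
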